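/- Suppose c_r = 2c_c·τ/(τ−4) with τ > 4, and in a local net-tree on P_{j−1}, point p_i has center p_k^ℓ. If a newly inserted point p_j (inserted at a level f ∈ {ℓ−1, ℓ, ℓ+1}) touches p_i via a basic touch (which requires d(p_i, p_k) > c_p·τ^(ℓ−1)/2), then d(p_i, p_j) < (24·c_c·τ⁴(τ−1)/(c_p(τ+2)(τ−4)))·d(p_i, P_{j−1}). -/

import Mathlib

set_option maxHeartbeats 1000000 in
/-- If `p_j` (inserted at a level `f ∈ {ℓ-1, ℓ, ℓ+1}`) touches `p_i` via a basic touch,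
where `p_k^ℓ` is the center of `p_i` in the already-inserted set `Pprev`, then
`d(p_i, p_j) < (24·c_c·τ⁴(τ-1)/(c_p(τ+2)(τ-4)))·d(p_i, Pprev)`.
Hypotheses: `c_r = 2c_c·τ/(τ-4)` with `τ > 4`; the center bound `d(p_i,p_k) ≤ c_r·τ^ℓ`;
the ANN bound `d(p_i,p_k) < (2τ(τ-1)/(τ+2))·d(p_i,Pprev)`; the outer-cell condition
`d(p_i,p_k) > c_p·τ^(ℓ-1)/2`; and, in each of the three cases for `f`, the chains of
relative/covering edges connecting `p_j` to `p_k` through intermediate nodes. -/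
theorem basic_touch_distance_bound {M : Type*} [MetricSpace M]
    (τ c_p c_c c_r : ℝ) (hτ : 4 < τ) (hcp : 0 < c_p) (hcpc : c_p ≤ c_c)
    (hcr : c_r = 2 * c_c * τ / (τ - 4))
    (Pprev : Set M) (p_i p_k p_j : M) (ℓ f : ℤ)
    (hcen : dist p_i p_k ≤ c_r * τ ^ ℓ)
    (hann : dist p_i p_k < (2 * τ * (τ - 1) / (τ + 2)) * Metric.infDist p_i Pprev)
    (houter : c_p * τ ^ (ℓ - 1) / 2 < dist p_i p_k)
    (hcase :
      (f = ℓ + 1 ∧ ∃ x : M, dist p_j x ≤ c_r * τ ^ (ℓ + 1) ∧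
        dist x p_k ≤ c_c * τ ^ (ℓ + 1)) ∨
      (f = ℓ - 1 ∧ ∃ x : M, dist p_j x ≤ (c_c + c_r / τ) * τ ^ ℓ ∧
        dist x p_k ≤ c_r * τ ^ ℓ) ∨
      (f = ℓ ∧ ∃ x y : M, dist p_j x ≤ (c_c + c_r / τ) * τ ^ (ℓ + 1) ∧
        dist x y ≤ c_r * τ ^ (ℓ + 1) ∧ dist y p_k ≤ c_c * τ ^ (ℓ + 1))) :
    dist p_i p_j <
      (24 * c_c * τ ^ (4 : ℕ) * (τ - 1) / (c_p * (τ + 2) * (τ - 4))) *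
        Metric.infDist p_i Pprev := by

  have hτ0 : (0:ℝ) < τ := by linarith
  have hne : τ ≠ 0 := ne_of_gt hτ0
  have hT : (0:ℝ) < τ ^ (ℓ - 1) := zpow_pos hτ0 _
  have hcc : (0:ℝ) < c_c := lt_of_lt_of_le hcp hcpc
  have hcr0 : (0:ℝ) < c_r := by
    rw [hcr]; apply div_pos (by nlinarith) (by linarith)
  have hcreq : c_r * (τ - 4) = 2 * c_c * τ := by
    rw [hcr, div_mul_cancel₀ _ (by linarith : τ - 4 ≠ 0)]
  have hccr : c_c ≤ c_r := by nlinarith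
  have hpl : τ ^ ℓ = τ ^ (ℓ - 1) * τ := by
    rw [← zpow_add_one₀ hne]; norm_num
  have hpl1 : τ ^ (ℓ + 1) = τ ^ (ℓ - 1) * τ * τ := by
    rw [← hpl, ← zpow_add_one₀ hne]
  set T := τ ^ (ℓ - 1) with hTdef
  have hcen' : dist p_i p_k ≤ c_r * (T * τ) := by rw [← hpl]; exact hcen
  have houter' : c_p * T < 2 * dist p_i p_k := by linarith
  -- key bound: dist p_j p_k ≤ 2 c_r τ^(ℓ+1)
  have key : dist p_j p_k ≤ 2 * c_r * (T * τ * τ) := by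
    rcases hcase with ⟨_, x, hx1, hx2⟩ | ⟨_, x, hx1, hx2⟩ | ⟨_, x, y, hx1, hxy, hy2⟩
    · have ht := dist_triangle p_j x p_k
      rw [hpl1] at hx1 hx2
      nlinarith [mul_nonneg (sub_nonneg.2 hccr) (mul_pos (mul_pos hT hτ0) hτ0).le]
    · have ht := dist_triangle p_j x p_k
      rw [hpl] at hx1 hx2
      have e : (c_c + c_r / τ) * (T * τ) = c_c * T * τ + c_r * T := by
        field_simp
      rw [e] at hx1
      nlinarith [mul_pos hT hτ0, mul_pos hcr0 hT, mul_pos (mul_pos hcr0 hT) hτ0]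
    · have ht := dist_triangle4 p_j x y p_k
      rw [hpl1] at hx1 hxy hy2
      have e : (c_c + c_r / τ) * (T * τ * τ) = c_c * T * τ * τ + c_r * T * τ := by
        field_simp
      rw [e] at hx1
      nlinarith [mul_pos hT hτ0, mul_pos (mul_pos hT hτ0) hτ0,
        mul_pos hcr0 (mul_pos hT hτ0)]
  have hmain : dist p_i p_j < 3 * c_r * (T * τ * τ) := by
    have ht := dist_triangle p_i p_k p_j
    rw [dist_comm p_k p_j] at ht
    nlinarith [mul_pos (mul_pos hcr0 hT) hτ0]
  have hI : (0 : ℝ) ≤ Metric.infDist p_i Pprev := Metric.infDist_nonneg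
  have hann' : (τ + 2) * dist p_i p_k < 2 * τ * (τ - 1) * Metric.infDist p_i Pprev := by
    rw [div_mul_eq_mul_div, lt_div_iff₀ (by linarith : (0:ℝ) < τ + 2)] at hann
    nlinarith [hann]
  have h3 : c_p * dist p_i p_j < 6 * c_r * τ ^ 2 * dist p_i p_k := by
    have a1 := mul_lt_mul_of_pos_left hmain hcp
    have a2 := mul_lt_mul_of_pos_right houter' (by positivity : (0:ℝ) < 3 * c_r * τ ^ 2)
    nlinarith [a1, a2]
  have hB : (0:ℝ) < c_p * (τ + 2) * (τ - 4) := by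
    apply mul_pos (mul_pos hcp (by linarith)) (by linarith)
  rw [div_mul_eq_mul_div, lt_div_iff₀ hB]
  have h4 := mul_lt_mul_of_pos_left h3 (mul_pos (by linarith : (0:ℝ) < τ + 2) (by linarith : (0:ℝ) < τ - 4))
  have h5 := mul_lt_mul_of_pos_left hann'
    (mul_pos (by positivity : (0:ℝ) < 6 * c_r * τ ^ 2) (by linarith : (0:ℝ) < τ - 4))
  have h6 : 6 * c_r * τ ^ 2 * (τ - 4) * (2 * τ * (τ - 1) * Metric.infDist p_i Pprev)
      = 24 * c_c * τ ^ (4:ℕ) * (τ - 1) * Metric.infDist p_i Pprev := by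
    have : 6 * c_r * τ ^ 2 * (τ - 4) * (2 * τ * (τ - 1) * Metric.infDist p_i Pprev)
        = 12 * (c_r * (τ - 4)) * τ ^ 3 * (τ - 1) * Metric.infDist p_i Pprev := by ring
    rw [this, hcreq]; ring
  nlinarith [h4, h5, h6]
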